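/- arXiv:1711.06783 — 6 statements merged into one kernel-verified Lean document; each statement's English description precedes it below -/
import Mathlib

section
/- Let (G_a, G_b) ~ ER(n, p), let π be a permutation of [n], let τ = l(π), and let t̃ be the number of unordered vertex pairs e with τ(e) ≠ e. Then E[δ(τ; G_a, G_b)] = t̃·(p00·p11 − p01·p10). -/
open Finset

/-- Unordered pairs of distinct vertices of `[n]`. -/
abbrev VPairs (n : ℕ) := {e : Sym2 (Fin n) // ¬ e.IsDiag}

/-- A graph on `[n]`, identified with its edge-indicator function. -/
abbrev LGraph (n : ℕ) := VPairs n → Bool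

/-- The permutation of vertex pairs induced by a permutation of vertices. -/
def pairPerm {n : ℕ} (π : Equiv.Perm (Fin n)) : Equiv.Perm (VPairs n) where
  toFun e := ⟨e.val.map π, fun h => e.prop ((Sym2.isDiag_map π.injective).mp h)⟩
  invFun e := ⟨e.val.map π.symm, fun h => e.prop ((Sym2.isDiag_map π.symm.injective).mp h)⟩
  left_inv e := by
    ext1
    simp [Sym2.map_map]
  right_inv e := by
    ext1
    simp [Sym2.map_map]

/-- Hamming distance between two labelings. -/
def hamming {S : Type*} [Fintype S] [DecidableEq S] (f g : S → Bool) : ℕ :=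
  (Finset.univ.filter fun e => f e ≠ g e).card

/-- `δ(τ; f, g) = (Δ(f∘τ, g) − Δ(f, g))/2`, as a rational number. -/
def deltaQ {S : Type*} [Fintype S] [DecidableEq S] (τ : Equiv.Perm S) (f g : S → Bool) : ℚ :=
  (((hamming (f ∘ τ) g : ℚ)) - (hamming f g : ℚ)) / 2

/-- The entry `(i,j)` of the type `μ(f,g)`. -/
def typeCount {S : Type*} [Fintype S] [DecidableEq S] (f g : S → Bool) (i j : Bool) : ℕ :=
  (Finset.univ.filter fun e => f e = i ∧ g e = j).card

/-- The joint edge distribution determined by a probability vector. -/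
def pv (p11 p10 p01 p00 : ℝ) : Bool → Bool → ℝ :=
  fun a b => if a then (if b then p11 else p10) else (if b then p01 else p00)

open Classical in
/-- The probability of an event under the correlated Erdős–Rényi model `ER(n,p)`. -/
noncomputable def ERprob (n : ℕ) (p : Bool → Bool → ℝ)
    (E : LGraph n × LGraph n → Prop) : ℝ :=
  ∑ gab : LGraph n × LGraph n,
    (if E gab then (1 : ℝ) else 0) * ∏ e : VPairs n, p (gab.1 e) (gab.2 e)

open Classical in
/-- The probability of an event under the joint distribution of a uniformly random
permutation `Π` of `[n]` together with `(G_a, G_b) ~ ER(n,p)` independent of it. -/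
noncomputable def ERPermProb (n : ℕ) (p : Bool → Bool → ℝ)
    (E : Equiv.Perm (Fin n) → LGraph n × LGraph n → Prop) : ℝ :=
  (∑ π : Equiv.Perm (Fin n), ∑ gab : LGraph n × LGraph n,
    (if E π gab then (1 : ℝ) else 0) * ∏ e : VPairs n, p (gab.1 e) (gab.2 e))
    / (Nat.factorial n)

/-- The anonymized graph `G_c`, determined by `G_c(l(Π)(e)) = G_a(e)`. -/
def anonymize {n : ℕ} (π : Equiv.Perm (Fin n)) (ga : LGraph n) : LGraph n :=
  fun e => ga ((pairPerm π).symm e)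

/-- `S_{n,nt}`: the permutations of `[n]` with exactly `nt` non-fixed points. -/
def Snn (n nt : ℕ) : Finset (Equiv.Perm (Fin n)) :=
  Finset.univ.filter fun π => (Finset.univ.filter fun x => π x ≠ x).card = nt

open Classical in
/-- The generating function `A_{S,τ}(w,z)`; here `z^δ` is expressed as `√z^(2δ)`. -/
noncomputable def AgF {S : Type*} [Fintype S] (τ : Equiv.Perm S)
    (w : Bool → Bool → ℝ) (z : ℝ) : ℝ :=
  ∑ g : S → Bool, ∑ h : S → Bool,
    (Real.sqrt z) ^ ((hamming (g ∘ τ) h : ℤ) - (hamming g h : ℤ)) *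
      ∏ i : Bool, ∏ j : Bool, w i j ^ typeCount g h i j

/-- `a_ℓ(w,z)`: the generating function of a single cycle of length `ℓ`. -/
noncomputable def aGF (ℓ : ℕ) (w : Bool → Bool → ℝ) (z : ℝ) : ℝ :=
  AgF (finRotate ℓ) w z

open Classical in
/-- The number of cycles of length `ℓ` in the cycle decomposition of `τ`
(the number of points whose `τ`-orbit has size `ℓ`, divided by `ℓ`). -/
noncomputable def cycleCount {S : Type*} [Fintype S] (τ : Equiv.Perm S) (ℓ : ℕ) : ℕ :=
  (Finset.univ.filter fun x : S =>
    (Finset.univ.filter fun y : S => τ.SameCycle x y).card = ℓ).card / ℓ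

open Classical in
/-- The probability of an event under an Erdős–Rényi graph `G(n,p)`. -/
noncomputable def ERgraphProb (n : ℕ) (p : ℝ) (E : LGraph n → Prop) : ℝ :=
  ∑ g : LGraph n,
    (if E g then (1 : ℝ) else 0) * ∏ e : VPairs n, (if g e then p else 1 - p)

open Classical in
/-- The number of automorphisms of a graph. -/
noncomputable def autCard {n : ℕ} (g : LGraph n) : ℕ :=
  (Finset.univ.filter fun π : Equiv.Perm (Fin n) =>
    ∀ e : VPairs n, g (pairPerm π e) = g e).card

section aux
variable {S γ : Type*} [Fintype S] [DecidableEq S] [Fintype γ] [DecidableEq γ]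

lemma marg1 (q : γ → ℝ) (hq : ∑ c, q c = 1) (e : S) (F : γ → ℝ) :
    ∑ u : S → γ, F (u e) * ∏ i, q (u i) = ∑ c, F c * q c := by
  have hprod : ∀ (u : S → γ) (c : γ),
      ∏ i, ((if i = e then (if u i = c then (1:ℝ) else 0) else 1) * q (u i))
        = (if u e = c then (1:ℝ) else 0) * ∏ i, q (u i) := by
    intro u c
    rw [Finset.prod_mul_distrib, Finset.prod_ite_eq']
    simp
  have step1 : ∀ u : S → γ, F (u e) * ∏ i, q (u i)
      = ∑ c, F c * ∏ i, ((if i = e then (if u i = c then (1:ℝ) else 0) else 1) * q (u i)) := by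
    intro u
    simp only [hprod, ← mul_assoc]
    rw [← Finset.sum_mul]
    congr 1
    simp
  rw [Finset.sum_congr rfl fun u _ => step1 u, Finset.sum_comm]
  refine Finset.sum_congr rfl fun c _ => ?_
  rw [← Finset.mul_sum]
  congr 1
  have := Finset.prod_univ_sum (t := fun _ : S => (univ : Finset γ))
    (f := fun i x => (if i = e then (if x = c then (1:ℝ) else 0) else 1) * q x)
  rw [Fintype.piFinset_univ] at this
  rw [← this]
  rw [Finset.prod_eq_single_of_mem e (Finset.mem_univ e)]
  · simp
  · intro i _ hi
    simp [hi, hq]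

lemma marg2 (q : γ → ℝ) (hq : ∑ c, q c = 1) (e1 e2 : S) (hne : e1 ≠ e2) (F : γ → γ → ℝ) :
    ∑ u : S → γ, F (u e1) (u e2) * ∏ i, q (u i) = ∑ c, ∑ d, F c d * (q c * q d) := by
  have hprod : ∀ (u : S → γ) (c d : γ),
      ∏ i, ((if i = e1 then (if u i = c then (1:ℝ) else 0) else 1) *
        ((if i = e2 then (if u i = d then (1:ℝ) else 0) else 1) * q (u i)))
        = (if u e1 = c then (1:ℝ) else 0) * ((if u e2 = d then (1:ℝ) else 0) * ∏ i, q (u i)) := by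
    intro u c d
    rw [Finset.prod_mul_distrib, Finset.prod_mul_distrib, Finset.prod_ite_eq',
      Finset.prod_ite_eq']
    simp
  have step1 : ∀ u : S → γ, F (u e1) (u e2) * ∏ i, q (u i)
      = ∑ c, ∑ d, F c d * ∏ i, ((if i = e1 then (if u i = c then (1:ℝ) else 0) else 1) *
        ((if i = e2 then (if u i = d then (1:ℝ) else 0) else 1) * q (u i))) := by
    intro u
    simp only [hprod]
    simp only [← mul_assoc]
    simp only [← Finset.sum_mul]
    congr 1
    simp [mul_ite, mul_zero, mul_one]
  rw [Finset.sum_congr rfl fun u _ => step1 u, Finset.sum_comm]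
  refine Finset.sum_congr rfl fun c _ => ?_
  rw [Finset.sum_comm]
  refine Finset.sum_congr rfl fun d _ => ?_
  rw [← Finset.mul_sum]
  congr 1
  have := Finset.prod_univ_sum (t := fun _ : S => (univ : Finset γ))
    (f := fun i x => (if i = e1 then (if x = c then (1:ℝ) else 0) else 1) *
      ((if i = e2 then (if x = d then (1:ℝ) else 0) else 1) * q x))
  rw [Fintype.piFinset_univ] at this
  rw [← this]
  have h1 : ∀ i : S, (∑ x, (if i = e1 then (if x = c then (1:ℝ) else 0) else 1) *
      ((if i = e2 then (if x = d then (1:ℝ) else 0) else 1) * q x))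
      = if i = e1 then q c else if i = e2 then q d else 1 := by
    intro i
    by_cases h1 : i = e1
    · subst h1
      simp [hne]
    · by_cases h2 : i = e2
      · subst h2
        simp [h1]
      · simp [h1, h2, hq]
  rw [Finset.prod_congr rfl fun i _ => h1 i]
  rw [show (univ : Finset S) = insert e1 (insert e2 (univ \ {e1, e2})) from by
    ext i; by_cases h1 : i = e1 <;> by_cases h2 : i = e2 <;> simp [h1, h2]]
  rw [Finset.prod_insert, Finset.prod_insert]
  · rw [Finset.prod_eq_one]
    · simp [Ne.symm hne]
    · intro i hi
      simp at hi
      simp [hi.1, hi.2]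
  · simp
  · simp [hne]

end aux

/-- the expected value of `δ(τ; G_a, G_b)`. -/
theorem expectation_delta
    (n : ℕ) (p11 p10 p01 p00 : ℝ)
    (hpos : 0 ≤ p11 ∧ 0 ≤ p10 ∧ 0 ≤ p01 ∧ 0 ≤ p00)
    (hsum : p11 + p10 + p01 + p00 = 1)
    (π : Equiv.Perm (Fin n)) :
    ∑ gab : LGraph n × LGraph n,
        ((deltaQ (pairPerm π) gab.1 gab.2 : ℚ) : ℝ) *
          ∏ e : VPairs n, pv p11 p10 p01 p00 (gab.1 e) (gab.2 e)
      = ((Finset.univ.filter fun e : VPairs n => pairPerm π e ≠ e).card : ℝ) *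
          (p00 * p11 - p01 * p10) := by
  classical
  set τ := pairPerm π with hτ
  set q : Bool × Bool → ℝ := fun c => pv p11 p10 p01 p00 c.1 c.2 with hqdef
  have hq : ∑ c, q c = 1 := by
    rw [Fintype.sum_prod_type]
    simp [hqdef, pv]
    linarith
  have hcv : ∀ φ : LGraph n × LGraph n → ℝ,
      ∑ gab, φ gab = ∑ u : VPairs n → Bool × Bool, φ (fun s => (u s).1, fun s => (u s).2) := by
    intro φ
    exact (Equiv.sum_comp (Equiv.arrowProdEquivProdArrow (VPairs n) (fun _ => Bool) (fun _ => Bool)) φ).symm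
  rw [hcv]
  have hham : ∀ f g : LGraph n, ((hamming f g : ℝ)) = ∑ e : VPairs n,
      (if f e ≠ g e then (1:ℝ) else 0) := by
    intro f g
    rw [hamming, Finset.card_filter]
    push_cast
    rfl
  have hdelta : ∀ f g : LGraph n, ((deltaQ τ f g : ℚ) : ℝ)
      = (∑ e : VPairs n, ((if f (τ e) ≠ g e then (1:ℝ) else 0)
          - (if f e ≠ g e then (1:ℝ) else 0))) / 2 := by
    intro f g
    rw [deltaQ]
    push_cast
    rw [hham, hham, Finset.sum_sub_distrib]
    rfl
  simp only [hdelta]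
  have key : ∀ e : VPairs n, ∑ u : VPairs n → Bool × Bool,
      ((if (u (τ e)).1 ≠ (u e).2 then (1:ℝ) else 0)
        - (if (u e).1 ≠ (u e).2 then (1:ℝ) else 0)) * ∏ i, q (u i)
      = if τ e = e then 0 else 2 * (p00 * p11 - p01 * p10) := by
    intro e
    by_cases h : τ e = e
    · simp [h]
    · rw [if_neg h]
      simp only [sub_mul]
      rw [Finset.sum_sub_distrib]
      rw [marg2 q hq (τ e) e h (fun c d => if c.1 ≠ d.2 then (1:ℝ) else 0),
        marg1 q hq e (fun c => if c.1 ≠ c.2 then (1:ℝ) else 0)]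
      rw [Fintype.sum_prod_type]
      simp only [Fintype.sum_prod_type, hqdef, pv]
      simp [Fintype.sum_bool]
      linear_combination (p10 + p01) * hsum
  calc ∑ u : VPairs n → Bool × Bool,
        (∑ e : VPairs n, ((if (u (τ e)).1 ≠ (u e).2 then (1:ℝ) else 0)
          - (if (u e).1 ≠ (u e).2 then (1:ℝ) else 0))) / 2 * ∏ i, q (u i)
      = (∑ e : VPairs n, ∑ u : VPairs n → Bool × Bool,
        ((if (u (τ e)).1 ≠ (u e).2 then (1:ℝ) else 0)
          - (if (u e).1 ≠ (u e).2 then (1:ℝ) else 0)) * ∏ i, q (u i)) / 2 := by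
        have perU : ∀ u : VPairs n → Bool × Bool,
            (∑ e : VPairs n, ((if (u (τ e)).1 ≠ (u e).2 then (1:ℝ) else 0)
              - (if (u e).1 ≠ (u e).2 then (1:ℝ) else 0))) / 2 * ∏ i, q (u i)
            = (∑ e : VPairs n, ((if (u (τ e)).1 ≠ (u e).2 then (1:ℝ) else 0)
              - (if (u e).1 ≠ (u e).2 then (1:ℝ) else 0)) * ∏ i, q (u i)) / 2 := by
          intro u
          rw [div_mul_eq_mul_div, Finset.sum_mul]
        rw [Finset.sum_congr rfl fun u _ => perU u, ← Finset.sum_div, Finset.sum_comm]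
    _ = (∑ e : VPairs n, if τ e = e then (0:ℝ) else 2 * (p00 * p11 - p01 * p10)) / 2 := by
        rw [Finset.sum_congr rfl fun e _ => key e]
    _ = ((Finset.univ.filter fun e : VPairs n => τ e ≠ e).card : ℝ)
          * (p00 * p11 - p01 * p10) := by
        have : ∀ e : VPairs n, (if τ e = e then (0:ℝ) else 2 * (p00 * p11 - p01 * p10))
            = if τ e ≠ e then 2 * (p00 * p11 - p01 * p10) else 0 := by
          intro e; by_cases h : τ e = e <;> simp [h]
        rw [Finset.sum_congr rfl fun e _ => this e, ← Finset.sum_filter,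
          Finset.sum_const, nsmul_eq_mul]
        ring
end

section
/- Let w be a 2×2 matrix of positive reals and let z > 0 be real. Then for every integer ℓ ≥ 2, a_ℓ(w, z) ≤ a_2(w, z)^{ℓ/2}, where a_2(w, z) = (w00 + w01 + w10 + w11)² + 2·w00·w11·(z − 1) + 2·w01·w10·(z⁻¹ − 1). -/
open Finset

namespace AGFaux

noncomputable def F (w : Bool → Bool → ℝ) (z : ℝ) (a b a' : Bool) : ℝ :=
  Real.sqrt z ^ ((if a' ≠ b then (1:ℤ) else 0) - (if a ≠ b then (1:ℤ) else 0)) * w a b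

noncomputable def M (w : Bool → Bool → ℝ) (z : ℝ) (a a' : Bool) : ℝ :=
  ∑ b : Bool, F w z a b a'

noncomputable def P (w : Bool → Bool → ℝ) (z : ℝ) : ℕ → Bool → Bool → ℝ
  | 0, a, c => if a = c then 1 else 0
  | (k+1), a, c => ∑ b : Bool, M w z a b * P w z k b c

lemma zpow_sum₀ {x : ℝ} (hx : x ≠ 0) {ι : Type*} (s : Finset ι) (f : ι → ℤ) :
    x ^ (∑ i ∈ s, f i) = ∏ i ∈ s, x ^ f i := by
  classical
  induction s using Finset.cons_induction with
  | empty => simp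
  | cons a s ha ih => rw [Finset.sum_cons, Finset.prod_cons, zpow_add₀ hx, ih]

lemma summand_eq (w : Bool → Bool → ℝ) (z : ℝ) (hz : 0 < z) (ℓ : ℕ) (g h : Fin ℓ → Bool) :
    (Real.sqrt z) ^ ((hamming (g ∘ finRotate ℓ) h : ℤ) - (hamming g h : ℤ)) *
      ∏ i : Bool, ∏ j : Bool, w i j ^ typeCount g h i j
    = ∏ e : Fin ℓ, F w z (g e) (h e) (g (finRotate ℓ e)) := by
  have hs : Real.sqrt z ≠ 0 := ne_of_gt (Real.sqrt_pos.mpr hz)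
  have h1 : ∀ f : Fin ℓ → Bool, (hamming f h : ℤ) = ∑ e : Fin ℓ, (if f e ≠ h e then (1:ℤ) else 0) := by
    intro f
    rw [hamming, Finset.card_filter]
    push_cast
    simp
  have h2 : (Real.sqrt z) ^ ((hamming (g ∘ finRotate ℓ) h : ℤ) - (hamming g h : ℤ))
      = ∏ e : Fin ℓ, (Real.sqrt z) ^
        ((if g (finRotate ℓ e) ≠ h e then (1:ℤ) else 0) - (if g e ≠ h e then (1:ℤ) else 0)) := by
    rw [h1, h1, ← Finset.sum_sub_distrib, zpow_sum₀ hs]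
    rfl
  have h3 : ∏ i : Bool, ∏ j : Bool, w i j ^ typeCount g h i j
      = ∏ e : Fin ℓ, w (g e) (h e) := by
    have : ∀ i j : Bool, w i j ^ typeCount g h i j
        = ∏ e : Fin ℓ, (if g e = i ∧ h e = j then w i j else 1) := by
      intro i j
      rw [typeCount, ← Finset.prod_const, Finset.prod_filter]
    simp only [this]
    have swap : (∏ i : Bool, ∏ j : Bool, ∏ e : Fin ℓ, (if g e = i ∧ h e = j then w i j else 1))
        = ∏ e : Fin ℓ, ∏ i : Bool, ∏ j : Bool, (if g e = i ∧ h e = j then w i j else 1) := by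
      calc (∏ i : Bool, ∏ j : Bool, ∏ e : Fin ℓ, (if g e = i ∧ h e = j then w i j else 1))
          = ∏ i : Bool, ∏ e : Fin ℓ, ∏ j : Bool, (if g e = i ∧ h e = j then w i j else 1) :=
            Finset.prod_congr rfl (fun i _ => Finset.prod_comm)
        _ = _ := Finset.prod_comm
    rw [swap]
    refine Finset.prod_congr rfl (fun e _ => ?_)
    cases hg : g e <;> cases hh : h e <;> simp [hg, hh, Fintype.prod_bool]
  rw [h2, h3, ← Finset.prod_mul_distrib]
  rfl

lemma sum_cons (k : ℕ) (G : (Fin (k+1) → Bool) → ℝ) :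
    ∑ g : Fin (k+1) → Bool, G g = ∑ a : Bool, ∑ g : Fin k → Bool, G (Fin.cons a g) := by
  calc ∑ g : Fin (k+1) → Bool, G g
      = ∑ p : Bool × (Fin k → Bool), G (Fin.cons p.1 p.2) :=
        (Fintype.sum_equiv (Fin.consEquiv (fun _ => Bool)) (fun p => G (Fin.cons p.1 p.2)) G
          (fun p => rfl)).symm
    _ = ∑ a : Bool, ∑ g : Fin k → Bool, G (Fin.cons a g) := Fintype.sum_prod_type _

lemma chain (w : Bool → Bool → ℝ) (z : ℝ) (k : ℕ) :
    ∀ f : Bool → Bool → ℝ,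
    ∑ g : Fin (k+1) → Bool,
      (∏ i : Fin k, M w z (g i.castSucc) (g i.succ)) * f (g 0) (g (Fin.last k))
    = ∑ a : Bool, ∑ c : Bool, P w z k a c * f a c := by
  induction k with
  | zero =>
      intro f
      rw [sum_cons]
      simp [P]
  | succ k ih =>
      intro f
      rw [sum_cons]
      have key : ∀ a : Bool, ∑ g : Fin (k+1) → Bool,
          (∏ i : Fin (k+1), M w z ((Fin.cons a g : Fin (k+2) → Bool) i.castSucc)
              ((Fin.cons a g : Fin (k+2) → Bool) i.succ)) *
            f ((Fin.cons a g : Fin (k+2) → Bool) 0) ((Fin.cons a g : Fin (k+2) → Bool) (Fin.last (k+1)))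
          = ∑ b : Bool, ∑ c : Bool, P w z k b c * (M w z a b * f a c) := by
        intro a
        rw [← ih (fun b c => M w z a b * f a c)]
        refine Finset.sum_congr rfl (fun g _ => ?_)
        have e1 : ∀ i : Fin (k+1), (Fin.cons a g : Fin (k+2) → Bool) i.succ = g i := by
          intro i
          simp
        have e2 : (Fin.cons a g : Fin (k+2) → Bool) (Fin.last (k+1)) = g (Fin.last k) := by
          rw [← Fin.succ_last, e1]
        have e3 : ∏ i : Fin (k+1), M w z ((Fin.cons a g : Fin (k+2) → Bool) i.castSucc)
            ((Fin.cons a g : Fin (k+2) → Bool) i.succ)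
            = M w z a (g 0) * ∏ i : Fin k, M w z (g i.castSucc) (g i.succ) := by
          rw [Fin.prod_univ_succ]
          have f0 : M w z ((Fin.cons a g : Fin (k+2) → Bool) (0 : Fin (k+1)).castSucc)
              ((Fin.cons a g : Fin (k+2) → Bool) (0 : Fin (k+1)).succ) = M w z a (g 0) := by
            have : ((0 : Fin (k+1)).succ : Fin (k+2)) = (0 : Fin (k+1)).succ := rfl
            rw [show ((0 : Fin (k+1)).castSucc : Fin (k+2)) = 0 from rfl, Fin.cons_zero, e1]
          rw [f0]
          congr 1
        rw [e3, e2]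
        simp only [Fin.cons_zero]
        ring
      simp only [key]
      refine Finset.sum_congr rfl (fun a _ => ?_)
      rw [Finset.sum_comm]
      refine Finset.sum_congr rfl (fun c _ => ?_)
      simp only [P, Finset.sum_mul]
      refine Finset.sum_congr rfl (fun b _ => ?_)
      ring

lemma cyclic (w : Bool → Bool → ℝ) (z : ℝ) (k : ℕ) :
    ∑ g : Fin (k+1) → Bool, ∏ i : Fin (k+1), M w z (g i) (g (finRotate (k+1) i))
    = ∑ a : Bool, P w z (k+1) a a := by
  have step : ∀ g : Fin (k+1) → Bool,
      ∏ i : Fin (k+1), M w z (g i) (g (finRotate (k+1) i))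
      = (∏ i : Fin k, M w z (g i.castSucc) (g i.succ)) * M w z (g (Fin.last k)) (g 0) := by
    intro g
    rw [Fin.prod_univ_castSucc]
    congr 1
    · refine Finset.prod_congr rfl (fun i _ => ?_)
      rw [finRotate_succ_apply, Fin.coeSucc_eq_succ]
    · rw [finRotate_last]
  simp only [step]
  rw [chain w z k (fun b c => M w z c b)]
  simp only [P]
  rw [Finset.sum_comm]
  refine Finset.sum_congr rfl (fun c _ => ?_)
  refine Finset.sum_congr rfl (fun b _ => ?_)
  ring

noncomputable def tB (w : Bool → Bool → ℝ) (z : ℝ) : ℝ := M w z false false + M w z true true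

noncomputable def dB (w : Bool → Bool → ℝ) (z : ℝ) : ℝ :=
  M w z false false * M w z true true - M w z false true * M w z true false

lemma P_rec (w : Bool → Bool → ℝ) (z : ℝ) (k : ℕ) (a c : Bool) :
    P w z (k+2) a c = tB w z * P w z (k+1) a c - dB w z * P w z k a c := by
  simp only [P, Fintype.sum_bool, tB, dB]
  cases a <;> ring

noncomputable def sB (w : Bool → Bool → ℝ) (z : ℝ) (k : ℕ) : ℝ :=
  P w z k false false + P w z k true true

lemma sum_P_diag (w : Bool → Bool → ℝ) (z : ℝ) (k : ℕ) :
    ∑ a : Bool, P w z k a a = sB w z k := by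
  rw [Fintype.sum_bool, sB]; ring

lemma sB_zero (w : Bool → Bool → ℝ) (z : ℝ) : sB w z 0 = 2 := by norm_num [sB, P]

lemma sB_one (w : Bool → Bool → ℝ) (z : ℝ) : sB w z 1 = tB w z := by
  simp [sB, P, Fintype.sum_bool, tB]

lemma sB_rec (w : Bool → Bool → ℝ) (z : ℝ) (k : ℕ) :
    sB w z (k+2) = tB w z * sB w z (k+1) - dB w z * sB w z k := by
  simp only [sB, P_rec]; ring

lemma seq_closed (t d x y : ℝ) (hs : x + y = t) (hp : x * y = d) (u : ℕ → ℝ)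
    (h0 : u 0 = 2) (h1 : u 1 = t) (hr : ∀ k, u (k+2) = t * u (k+1) - d * u k) :
    ∀ k, u k = x ^ k + y ^ k := by
  have key : ∀ k, u k = x ^ k + y ^ k ∧ u (k+1) = x ^ (k+1) + y ^ (k+1) := by
    intro k
    induction k with
    | zero =>
        refine ⟨by rw [h0]; norm_num, ?_⟩
        rw [h1, ← hs, pow_one, pow_one]
    | succ n ih => exact ⟨ih.2, by rw [hr n, ih.1, ih.2, ← hs, ← hp]; ring⟩
  exact fun k => (key k).1

lemma pow_le_rpow_half (x : ℝ) (ℓ : ℕ) : x ^ ℓ ≤ (x ^ 2) ^ ((ℓ : ℝ) / 2) := by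
  have h1 : x ^ ℓ ≤ |x| ^ ℓ := by
    calc x ^ ℓ ≤ |x ^ ℓ| := le_abs_self _
    _ = |x| ^ ℓ := abs_pow x ℓ
  have h2 : (x ^ 2 : ℝ) ^ ((ℓ : ℝ) / 2) = |x| ^ ℓ := by
    rw [← sq_abs, ← Real.rpow_natCast |x| 2, ← Real.rpow_mul (abs_nonneg x), ← Real.rpow_natCast |x| ℓ]
    · congr 1
      push_cast
      ring
  linarith

lemma add_rpow_le {a b p : ℝ} (ha : 0 ≤ a) (hb : 0 ≤ b) (hp : 1 ≤ p) :
    a ^ p + b ^ p ≤ (a + b) ^ p := by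
  have h := NNReal.add_rpow_le_rpow_add a.toNNReal b.toNNReal hp
  have h2 := NNReal.coe_le_coe.mpr h
  push_cast at h2
  rwa [Real.coe_toNNReal a ha, Real.coe_toNNReal b hb] at h2

lemma M_pos (w : Bool → Bool → ℝ) (z : ℝ) (hw : ∀ i j, 0 < w i j) (hz : 0 < z)
    (a a' : Bool) : 0 < M w z a a' := by
  have hs : 0 < Real.sqrt z := Real.sqrt_pos.mpr hz
  refine Finset.sum_pos (fun b _ => ?_) ⟨true, Finset.mem_univ _⟩
  exact mul_pos (zpow_pos hs _) (hw a b)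

lemma hamming_classical {S : Type*} [ftS : Fintype S] [deS : DecidableEq S]
    (ft : Fintype S) (de : DecidableEq S) (f g : S → Bool) :
    @hamming S ft de f g = hamming f g := by
  cases Subsingleton.elim ft ftS
  cases Subsingleton.elim de deS
  rfl

lemma typeCount_classical {S : Type*} [ftS : Fintype S] [deS : DecidableEq S]
    (ft : Fintype S) (de : DecidableEq S) (f g : S → Bool) (i j : Bool) :
    @typeCount S ft de f g i j = typeCount f g i j := by
  cases Subsingleton.elim ft ftS
  cases Subsingleton.elim de deS
  rfl

lemma sum_univ_classical {α : Type*} [ft0 : Fintype α] (ft : Fintype α) (f : α → ℝ) :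
    @Finset.sum α ℝ _ (@Finset.univ α ft) f = ∑ x, f x := by
  cases Subsingleton.elim ft ft0
  rfl

lemma aGF_eq (w : Bool → Bool → ℝ) (z : ℝ) (hz : 0 < z) (k : ℕ) :
    aGF (k+1) w z = sB w z (k+1) := by
  have main : (∑ g : Fin (k+1) → Bool, ∑ h : Fin (k+1) → Bool,
      (Real.sqrt z) ^ ((hamming (g ∘ finRotate (k+1)) h : ℤ) - (hamming g h : ℤ)) *
        ∏ i : Bool, ∏ j : Bool, w i j ^ typeCount g h i j)
      = sB w z (k+1) := by
    rw [← sum_P_diag, ← cyclic w z k]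
    refine Finset.sum_congr rfl (fun g _ => ?_)
    calc ∑ h : Fin (k+1) → Bool,
        (Real.sqrt z) ^ ((hamming (g ∘ finRotate (k+1)) h : ℤ) - (hamming g h : ℤ)) *
            ∏ i : Bool, ∏ j : Bool, w i j ^ typeCount g h i j
        = ∑ h : Fin (k+1) → Bool, ∏ e : Fin (k+1), F w z (g e) (h e) (g (finRotate (k+1) e)) :=
          Finset.sum_congr rfl (fun h _ => summand_eq w z hz _ g h)
      _ = ∏ e : Fin (k+1), ∑ b : Bool, F w z (g e) b (g (finRotate (k+1) e)) := by
          rw [Finset.prod_univ_sum]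
          rw [Fintype.piFinset_univ]
      _ = ∏ e : Fin (k+1), M w z (g e) (g (finRotate (k+1) e)) := rfl
  rw [aGF, AgF]
  rw [Subsingleton.elim (fun a b => Classical.propDecidable (a = b) :
    DecidableEq (Fin (k+1))) (instDecidableEqFin (k+1))]
  exact main

end AGFaux

open AGFaux in

/-- `a_ℓ(w,z) ≤ a_2(w,z)^{ℓ/2}` for `ℓ ≥ 2`. -/
theorem aGF_le_aGF_two_pow
    (w : Bool → Bool → ℝ) (hw : ∀ i j, 0 < w i j) (z : ℝ) (hz : 0 < z)
    (ℓ : ℕ) (hℓ : 2 ≤ ℓ) :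
    aGF 2 w z
      = (w false false + w false true + w true false + w true true) ^ 2
        + 2 * w false false * w true true * (z - 1)
        + 2 * w false true * w true false * (z⁻¹ - 1) ∧
    aGF ℓ w z ≤ aGF 2 w z ^ ((ℓ : ℝ) / 2) := by
  have hsz : 0 < Real.sqrt z := Real.sqrt_pos.mpr hz
  have hC : 0 < M w z false true := M_pos w z hw hz false true
  have hE : 0 < M w z true false := M_pos w z hw hz true false
  set D : ℝ := (M w z false false - M w z true true) ^ 2
      + 4 * (M w z false true * M w z true false) with hDdef
  have hD : 0 ≤ D := by positivity
  have hsq : Real.sqrt D * Real.sqrt D = D := Real.mul_self_sqrt hD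
  set x : ℝ := (tB w z + Real.sqrt D) / 2 with hxdef
  set y : ℝ := (tB w z - Real.sqrt D) / 2 with hydef
  have hs : x + y = tB w z := by rw [hxdef, hydef]; ring
  have hp : x * y = dB w z := by
    have h4 : x * y = (tB w z * tB w z - Real.sqrt D * Real.sqrt D) / 4 := by
      rw [hxdef, hydef]; ring
    rw [h4, hsq, hDdef]
    simp only [tB, dB]
    ring
  have hclosed := seq_closed (tB w z) (dB w z) x y hs hp (sB w z)
    (sB_zero w z) (sB_one w z) (sB_rec w z)
  have haGF : ∀ n : ℕ, aGF (n+1) w z = x ^ (n+1) + y ^ (n+1) :=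
    fun n => (aGF_eq w z hz n).trans (hclosed (n+1))
  have ha2 : aGF 2 w z = x ^ 2 + y ^ 2 := haGF 1
  constructor
  · rw [ha2]
    have e : x ^ 2 + y ^ 2 = tB w z * tB w z - 2 * (x * y) := by
      rw [← hs]; ring
    rw [e, hp]
    have hA' : M w z false false = w false false + w false true := by
      simp [M, F, Fintype.sum_bool]
      try ring
    have hB' : M w z true true = w true false + w true true := by
      simp [M, F, Fintype.sum_bool]
      try ring
    have hC' : M w z false true
        = Real.sqrt z * w false false + (Real.sqrt z)⁻¹ * w false true := by
      simp [M, F, Fintype.sum_bool]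
      try ring
    have hE' : M w z true false
        = (Real.sqrt z)⁻¹ * w true false + Real.sqrt z * w true true := by
      simp [M, F, Fintype.sum_bool]
      try ring
    simp only [tB, dB, hA', hB', hC', hE']
    have hzz : Real.sqrt z * Real.sqrt z = z := Real.mul_self_sqrt hz.le
    obtain ⟨sq, hs1, hs2⟩ : ∃ sq : ℝ, Real.sqrt z = sq ∧ sq * sq = z :=
      ⟨Real.sqrt z, rfl, hzz⟩
    have hsne : sq ≠ 0 := by rw [← hs1]; exact ne_of_gt hsz
    rw [hs1, ← hs2]
    field_simp
    ring
  · obtain ⟨k, hk⟩ : ∃ k, ℓ = k + 1 := ⟨ℓ - 1, by omega⟩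
    subst hk
    rw [haGF k, ha2]
    have hstep1 : x ^ (k+1) + y ^ (k+1)
        ≤ (x ^ 2) ^ (((k+1 : ℕ) : ℝ) / 2) + (y ^ 2) ^ (((k+1 : ℕ) : ℝ) / 2) :=
      add_le_add (pow_le_rpow_half x (k+1)) (pow_le_rpow_half y (k+1))
    have hstep2 : (x ^ 2) ^ (((k+1 : ℕ) : ℝ) / 2) + (y ^ 2) ^ (((k+1 : ℕ) : ℝ) / 2)
        ≤ (x ^ 2 + y ^ 2) ^ (((k+1 : ℕ) : ℝ) / 2) := by
      refine add_rpow_le (sq_nonneg x) (sq_nonneg y) ?_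
      have h2 : (2 : ℝ) ≤ ((k+1 : ℕ) : ℝ) := by exact_mod_cast hℓ
      linarith
    exact le_trans hstep1 hstep2
end

section
/- For all natural numbers a, b, n with 1 ≤ n, a ≤ n and b ≤ n, and all real z > 0: Σ_{ℓ=0}^{min(a,b)} (C(a,ℓ)·C(n−a, b−ℓ)/C(n,b))·z^ℓ ≤ (1 − b/n + (b/n)·z)^a, where C(·,·) denotes the binomial coefficient. That is, the probability generating function of the hypergeometric distribution Hyp(a,b,n) is bounded by that of the binomial distribution with a trials and success probability b/n. -/
open Finset

lemma choose_mul_pow_le (b n : ℕ) (h : b ≤ n) : ∀ k, b.choose k * n ^ k ≤ n.choose k * b ^ k := by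
  intro k
  induction k with
  | zero => simp
  | succ k ih =>
    have hx : (b - k) * n ≤ (n - k) * b := by
      rw [Nat.sub_mul, Nat.sub_mul, mul_comm b n]
      exact Nat.sub_le_sub_left (Nat.mul_le_mul le_rfl h) _
    have key : b.choose (k+1) * n ^ (k+1) * (k+1) ≤ n.choose (k+1) * b ^ (k+1) * (k+1) := by
      calc b.choose (k+1) * n ^ (k+1) * (k+1) = (b.choose (k+1) * (k+1)) * (n ^ k * n) := by ring
        _ = (b.choose k * (b - k)) * (n ^ k * n) := by rw [Nat.choose_succ_right_eq]
        _ = (b.choose k * n ^ k) * ((b - k) * n) := by ring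
        _ ≤ (n.choose k * b ^ k) * ((n - k) * b) := Nat.mul_le_mul ih hx
        _ = (n.choose k * (n - k)) * (b ^ k * b) := by ring
        _ = (n.choose (k+1) * (k+1)) * (b ^ k * b) := by rw [Nat.choose_succ_right_eq]
        _ = n.choose (k+1) * b ^ (k+1) * (k+1) := by ring
    exact Nat.le_of_mul_le_mul_right key (Nat.succ_pos k)

lemma vand_sum (a b n k : ℕ) (ha : a ≤ n) (hka : k ≤ a) (hkb : k ≤ b) :
    ∑ ℓ ∈ Finset.range (min a b + 1), a.choose ℓ * (n - a).choose (b - ℓ) * ℓ.choose k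
      = a.choose k * (n - k).choose (b - k) := by
  set m := min a b with hm
  have hkm : k ≤ m := le_min hka hkb
  have h1 : ∑ ℓ ∈ Finset.range (m + 1), a.choose ℓ * (n - a).choose (b - ℓ) * ℓ.choose k
      = ∑ ℓ ∈ Finset.Ico k (m + 1), a.choose ℓ * (n - a).choose (b - ℓ) * ℓ.choose k := by
    refine (Finset.sum_subset ?_ ?_).symm
    · intro x hx
      simp only [Finset.mem_Ico] at hx
      exact Finset.mem_range.mpr hx.2
    · intro x hx hx'
      simp only [Finset.mem_range] at hx
      simp only [Finset.mem_Ico, not_and, not_lt] at hx'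
      have : x < k := by
        by_contra hc
        push_neg at hc
        exact absurd (hx' hc) (by omega)
      rw [Nat.choose_eq_zero_of_lt this, mul_zero]
  rw [h1, Finset.sum_Ico_eq_sum_range]
  have h2 : ∀ j ∈ Finset.range (m + 1 - k),
      a.choose (k + j) * (n - a).choose (b - (k + j)) * (k + j).choose k
        = a.choose k * ((a - k).choose j * (n - a).choose (b - k - j)) := by
    intro j hj
    simp only [Finset.mem_range] at hj
    have hja : k + j ≤ a := by omega
    have e1 : a.choose (k + j) * (k + j).choose k = a.choose k * (a - k).choose j := by
      have := Nat.choose_mul (n := a) (Nat.le_add_right k j)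
      simpa using this
    have e2 : b - (k + j) = b - k - j := by omega
    calc a.choose (k + j) * (n - a).choose (b - (k + j)) * (k + j).choose k
        = (a.choose (k + j) * (k + j).choose k) * (n - a).choose (b - (k + j)) := by ring
      _ = a.choose k * (a - k).choose j * (n - a).choose (b - k - j) := by rw [e1, e2]
      _ = a.choose k * ((a - k).choose j * (n - a).choose (b - k - j)) := by ring
  rw [Finset.sum_congr rfl h2, ← Finset.mul_sum]
  congr 1
  have h3 : ∑ j ∈ Finset.range (m + 1 - k), (a - k).choose j * (n - a).choose (b - k - j)
      = ∑ j ∈ Finset.range (b - k + 1), (a - k).choose j * (n - a).choose (b - k - j) := by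
    apply Finset.sum_subset
    · intro x hx
      simp only [Finset.mem_range] at hx ⊢
      omega
    · intro x hx hx'
      simp only [Finset.mem_range, not_lt] at hx hx'
      have : a - k < x := by omega
      rw [Nat.choose_eq_zero_of_lt this, zero_mul]
  rw [h3]
  have h4 := Nat.add_choose_eq (a - k) (n - a) (b - k)
  rw [Finset.Nat.sum_antidiagonal_eq_sum_range_succ_mk] at h4
  have h5 : a - k + (n - a) = n - k := by omega
  rw [h5] at h4
  exact h4.symm

lemma hyp_le_bin_of_one_le (a b n : ℕ) (hn : 1 ≤ n) (ha : a ≤ n) (hb : b ≤ n)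
    (z : ℝ) (hz : 1 ≤ z) :
    ∑ ℓ ∈ Finset.range (min a b + 1),
        ((a.choose ℓ : ℝ) * ((n - a).choose (b - ℓ) : ℝ) / (n.choose b : ℝ)) * z ^ ℓ
      ≤ (1 - (b : ℝ) / n + ((b : ℝ) / n) * z) ^ a := by
  set m := min a b with hm
  have hw : (0:ℝ) ≤ z - 1 := by linarith
  have hnpos : (0:ℝ) < n := by exact_mod_cast hn
  have hq0 : (0:ℝ) ≤ (b:ℝ)/n := by positivity
  have hCnb : (0:ℝ) < (n.choose b : ℝ) := by exact_mod_cast Nat.choose_pos hb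
  -- expand z^ℓ in powers of (z-1)
  have hzpow : ∀ ℓ ∈ Finset.range (m+1),
      z ^ ℓ = ∑ k ∈ Finset.range (m+1), (z-1) ^ k * (ℓ.choose k : ℝ) := by
    intro ℓ hℓ
    simp only [Finset.mem_range] at hℓ
    have h0 : z ^ ℓ = ((z-1)+1) ^ ℓ := by ring_nf
    rw [h0, add_pow]
    simp only [one_pow, mul_one]
    apply Finset.sum_subset
    · intro x hx
      simp only [Finset.mem_range] at hx ⊢
      omega
    · intro x hx hx'
      simp only [Finset.mem_range, not_lt] at hx hx'
      rw [Nat.choose_eq_zero_of_lt (by omega), Nat.cast_zero, mul_zero]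
  have step1 : (∑ ℓ ∈ Finset.range (m + 1),
        ((a.choose ℓ : ℝ) * ((n - a).choose (b - ℓ) : ℝ) / (n.choose b : ℝ)) * z ^ ℓ)
      = ∑ k ∈ Finset.range (m + 1), (z-1) ^ k *
          ((∑ ℓ ∈ Finset.range (m + 1),
            (a.choose ℓ : ℝ) * ((n - a).choose (b - ℓ) : ℝ) * (ℓ.choose k : ℝ)) / (n.choose b : ℝ)) := by
    rw [Finset.sum_congr rfl (fun ℓ hℓ => by rw [hzpow ℓ hℓ, Finset.mul_sum])]
    rw [Finset.sum_comm]
    refine Finset.sum_congr rfl fun k _ => ?_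
    rw [Finset.sum_div, Finset.mul_sum]
    refine Finset.sum_congr rfl fun ℓ _ => ?_
    ring
  rw [step1]
  -- evaluate the inner sum
  have step2 : ∀ k ∈ Finset.range (m + 1),
      (∑ ℓ ∈ Finset.range (m + 1),
          (a.choose ℓ : ℝ) * ((n - a).choose (b - ℓ) : ℝ) * (ℓ.choose k : ℝ))
        = (a.choose k : ℝ) * ((n - k).choose (b - k) : ℝ) := by
    intro k hk
    simp only [Finset.mem_range] at hk
    have hka : k ≤ a := by omega
    have hkb : k ≤ b := by omega
    have := vand_sum a b n k ha hka hkb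
    exact_mod_cast congrArg (Nat.cast : ℕ → ℝ) this
  -- termwise bound
  have step3 : ∀ k ∈ Finset.range (m + 1),
      (z-1) ^ k * (((a.choose k : ℝ) * ((n - k).choose (b - k) : ℝ)) / (n.choose b : ℝ))
        ≤ (z-1) ^ k * ((a.choose k : ℝ) * ((b:ℝ)/n) ^ k) := by
    intro k hk
    simp only [Finset.mem_range] at hk
    have hka : k ≤ a := by omega
    have hkb : k ≤ b := by omega
    have hkn : k ≤ n := le_trans hkb hb
    have hCnk : 0 < n.choose k := Nat.choose_pos hkn
    have hN : (n-k).choose (b-k) * n ^ k ≤ n.choose b * b ^ k := by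
      have h1 : n.choose k * ((n-k).choose (b-k) * n ^ k)
          = n.choose b * b.choose k * n ^ k := by
        rw [← mul_assoc, ← Nat.choose_mul (n := n) hkb]
      have h2 : n.choose b * b.choose k * n ^ k ≤ n.choose k * (n.choose b * b ^ k) := by
        calc n.choose b * b.choose k * n ^ k = n.choose b * (b.choose k * n ^ k) := by ring
          _ ≤ n.choose b * (n.choose k * b ^ k) :=
              Nat.mul_le_mul_left _ (choose_mul_pow_le b n hb k)
          _ = n.choose k * (n.choose b * b ^ k) := by ring
      exact Nat.le_of_mul_le_mul_left (h1 ▸ h2) hCnk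
    have hNR : ((n-k).choose (b-k) : ℝ) * (n:ℝ) ^ k ≤ (n.choose b : ℝ) * (b:ℝ) ^ k := by
      exact_mod_cast hN
    have hfrac : ((n - k).choose (b - k) : ℝ) / (n.choose b : ℝ) ≤ ((b:ℝ)/n) ^ k := by
      rw [div_pow, div_le_div_iff₀ hCnb (by positivity)]
      linarith [hNR]
    have h0 : (0:ℝ) ≤ (z-1) ^ k := by positivity
    have h1 : (0:ℝ) ≤ (a.choose k : ℝ) := by positivity
    calc (z-1) ^ k * (((a.choose k : ℝ) * ((n - k).choose (b - k) : ℝ)) / (n.choose b : ℝ))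
        = (z-1) ^ k * ((a.choose k : ℝ) * (((n - k).choose (b - k) : ℝ) / (n.choose b : ℝ))) := by ring
      _ ≤ (z-1) ^ k * ((a.choose k : ℝ) * ((b:ℝ)/n) ^ k) := by
          apply mul_le_mul_of_nonneg_left _ h0
          exact mul_le_mul_of_nonneg_left hfrac h1
  have hRHS : (1 - (b : ℝ) / n + ((b : ℝ) / n) * z) ^ a
      = ∑ k ∈ Finset.range (a + 1), (z-1) ^ k * ((a.choose k : ℝ) * ((b:ℝ)/n) ^ k) := by
    have h0 : (1 - (b : ℝ) / n + ((b : ℝ) / n) * z) = ((b:ℝ)/n * (z-1)) + 1 := by ring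
    rw [h0, add_pow]
    refine Finset.sum_congr rfl fun k _ => ?_
    rw [one_pow, mul_one, mul_pow]
    ring
  rw [hRHS]
  calc ∑ k ∈ Finset.range (m + 1), (z-1) ^ k *
          ((∑ ℓ ∈ Finset.range (m + 1),
            (a.choose ℓ : ℝ) * ((n - a).choose (b - ℓ) : ℝ) * (ℓ.choose k : ℝ)) / (n.choose b : ℝ))
      = ∑ k ∈ Finset.range (m + 1), (z-1) ^ k *
          (((a.choose k : ℝ) * ((n - k).choose (b - k) : ℝ)) / (n.choose b : ℝ)) := by
        refine Finset.sum_congr rfl fun k hk => ?_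
        rw [step2 k hk]
    _ ≤ ∑ k ∈ Finset.range (m + 1), (z-1) ^ k * ((a.choose k : ℝ) * ((b:ℝ)/n) ^ k) :=
        Finset.sum_le_sum step3
    _ ≤ ∑ k ∈ Finset.range (a + 1), (z-1) ^ k * ((a.choose k : ℝ) * ((b:ℝ)/n) ^ k) := by
        apply Finset.sum_le_sum_of_subset_of_nonneg
        · intro x hx
          simp only [Finset.mem_range] at hx ⊢
          omega
        · intro k _ _
          positivity

lemma reflect_sum (a b n : ℕ) (ha : a ≤ n) (hb : b ≤ n) (z : ℝ) (hz0 : z ≠ 0) :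
    z ^ a * ∑ j ∈ Finset.range (min a (n - b) + 1),
        ((a.choose j : ℝ) * ((n - a).choose ((n - b) - j) : ℝ) / (n.choose (n - b) : ℝ)) * (1/z) ^ j
      = ∑ ℓ ∈ Finset.range (min a b + 1),
        ((a.choose ℓ : ℝ) * ((n - a).choose (b - ℓ) : ℝ) / (n.choose b : ℝ)) * z ^ ℓ := by
  set g : ℕ → ℝ := fun ℓ => if ℓ ≤ b then
    ((a.choose ℓ : ℝ) * ((n - a).choose (b - ℓ) : ℝ) / (n.choose b : ℝ)) * z ^ ℓ else 0 with hg
  have claimA : ∑ ℓ ∈ Finset.range (min a b + 1),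
      ((a.choose ℓ : ℝ) * ((n - a).choose (b - ℓ) : ℝ) / (n.choose b : ℝ)) * z ^ ℓ
        = ∑ ℓ ∈ Finset.range (a + 1), g ℓ := by
    rw [← Finset.sum_subset (show Finset.range (min a b + 1) ⊆ Finset.range (a + 1) by
        intro x hx; simp only [Finset.mem_range] at hx ⊢; omega)
      (fun x hx hx' => by
        simp only [Finset.mem_range, not_lt] at hx hx'
        have : ¬ x ≤ b := by omega
        simp [hg, this])]
    refine Finset.sum_congr rfl fun ℓ hℓ => ?_
    simp only [Finset.mem_range] at hℓ
    have : ℓ ≤ b := by omega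
    simp [hg, this]
  have claimB : ∑ ℓ ∈ Finset.range (a + 1), g ℓ
      = ∑ j ∈ Finset.range (min a (n - b) + 1), z ^ a *
        (((a.choose j : ℝ) * ((n - a).choose ((n - b) - j) : ℝ) / (n.choose (n - b) : ℝ)) * (1/z) ^ j) := by
    rw [← Finset.sum_range_reflect g (a + 1)]
    have hre : ∀ j ∈ Finset.range (a + 1), g (a + 1 - 1 - j) = g (a - j) := by
      intro j _; congr 1
    rw [Finset.sum_congr rfl hre]
    rw [← Finset.sum_subset (show Finset.range (min a (n - b) + 1) ⊆ Finset.range (a + 1) by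
        intro x hx; simp only [Finset.mem_range] at hx ⊢; omega)
      (fun x hx hx' => by
        -- extra terms: n - b < x ≤ a, so g (a - x) = 0
        simp only [Finset.mem_range, not_lt] at hx hx'
        have h1 : a - x ≤ b := by omega
        have h2 : n - a < b - (a - x) := by omega
        simp [hg, h1, Nat.choose_eq_zero_of_lt h2])]
    refine Finset.sum_congr rfl fun j hj => ?_
    simp only [Finset.mem_range] at hj
    have hja : j ≤ a := by omega
    have hjnb : j ≤ n - b := by omega
    have hzpow : z ^ a * (1/z) ^ j = z ^ (a - j) := by
      rw [one_div, inv_pow, ← pow_sub₀ z hz0 hja]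
    by_cases hcase : a - j ≤ b
    · have e1 : a.choose (a - j) = a.choose j := Nat.choose_symm hja
      have e2 : n.choose (n - b) = n.choose b := Nat.choose_symm hb
      have e3 : (n - a).choose (b - (a - j)) = (n - a).choose ((n - b) - j) :=
        Nat.choose_symm_of_eq_add (by omega)
      simp only [hg, hcase, if_true, e1, e2, e3]
      rw [← hzpow]; ring
    · have h2 : n - a < (n - b) - j := by omega
      simp [hg, hcase, Nat.choose_eq_zero_of_lt h2]
  rw [claimA, claimB, Finset.mul_sum]

/-- the hypergeometric generating function is bounded by the binomial one. -/
theorem hyp_gf_le_bin_gf (a b n : ℕ) (hn : 1 ≤ n) (ha : a ≤ n) (hb : b ≤ n)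
    (z : ℝ) (hz : 0 < z) :
    ∑ ℓ ∈ Finset.range (min a b + 1),
        ((a.choose ℓ : ℝ) * ((n - a).choose (b - ℓ) : ℝ) / (n.choose b : ℝ)) * z ^ ℓ
      ≤ (1 - (b : ℝ) / n + ((b : ℝ) / n) * z) ^ a := by
  rcases le_or_gt 1 z with h1 | h1
  · exact hyp_le_bin_of_one_le a b n hn ha hb z h1
  · have hz0 : z ≠ 0 := ne_of_gt hz
    have hinv : 1 ≤ 1/z := by
      rw [le_div_iff₀ hz]; linarith
    have H := hyp_le_bin_of_one_le a (n - b) n hn ha (Nat.sub_le n b) (1/z) hinv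
    have hza : (0:ℝ) ≤ z ^ a := by positivity
    have H2 := mul_le_mul_of_nonneg_left H hza
    have hnpos : (0:ℝ) < n := by exact_mod_cast hn
    have hbn : ((n - b : ℕ) : ℝ) = (n:ℝ) - b := by
      exact Nat.cast_sub hb
    have hrhs : z ^ a * (1 - ((n - b : ℕ) : ℝ)/n + (((n - b : ℕ) : ℝ)/n) * (1/z)) ^ a
        = (1 - (b:ℝ)/n + ((b:ℝ)/n) * z) ^ a := by
      rw [← mul_pow, hbn]
      congr 1
      field_simp
      ring
    calc ∑ ℓ ∈ Finset.range (min a b + 1),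
          ((a.choose ℓ : ℝ) * ((n - a).choose (b - ℓ) : ℝ) / (n.choose b : ℝ)) * z ^ ℓ
        = z ^ a * ∑ j ∈ Finset.range (min a (n - b) + 1),
          ((a.choose j : ℝ) * ((n - a).choose ((n - b) - j) : ℝ) / (n.choose (n - b) : ℝ)) * (1/z) ^ j :=
          (reflect_sum a b n ha hb z hz0).symm
      _ ≤ z ^ a * (1 - ((n - b : ℕ) : ℝ)/n + (((n - b : ℕ) : ℝ)/n) * (1/z)) ^ a := H2
      _ = (1 - (b:ℝ)/n + ((b:ℝ)/n) * z) ^ a := hrhs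
end

section
/- For every n ≥ 1 and every real z with 0 ≤ z < 1/n: Σ_{ñ=0}^{n} |S_{n,ñ}|·z^{ñ} ≤ 1 + n²·z²/(1 − n·z). -/
open Finset

section AuxPermGF
open Finset

lemma emb_image {α : Type*} [LinearOrder α] [DecidableEq α] (s : Finset α) {k : ℕ} (h : s.card = k) :
    Finset.image (s.orderEmbOfFin h) Finset.univ = s := by
  apply Finset.coe_injective
  rw [Finset.coe_image, Finset.coe_univ, Set.image_univ, Finset.range_orderEmbOfFin]

lemma supp_image {n : ℕ} (π : Equiv.Perm (Fin n)) :
    (Finset.univ.filter fun x => π x ≠ x).image π = (Finset.univ.filter fun x => π x ≠ x) := by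
  apply Finset.eq_of_subset_of_card_le
  · intro y hy
    simp only [mem_image, mem_filter, mem_univ, true_and] at hy ⊢
    obtain ⟨x, hx, rfl⟩ := hy
    exact fun h => hx (π.injective h)
  · rw [Finset.card_image_of_injective _ π.injective]

lemma card_Snn_le (n nt : ℕ) (hn : 1 ≤ n) : (Snn n nt).card ≤ n ^ nt := by
  classical
  set F : Equiv.Perm (Fin n) → (Fin nt → Fin n) := fun π =>
    if h : (Finset.univ.filter fun x => π x ≠ x).card = nt then
      fun i => π ((Finset.univ.filter fun x => π x ≠ x).orderEmbOfFin h i)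
    else fun _ => ⟨0, hn⟩ with hF
  have key : ∀ π, (h : (Finset.univ.filter fun x => π x ≠ x).card = nt) →
      Finset.image (F π) Finset.univ = (Finset.univ.filter fun x => π x ≠ x) := by
    intro π h
    have hFe : F π = fun i => π ((Finset.univ.filter fun x => π x ≠ x).orderEmbOfFin h i) := by
      rw [hF]; simp [h]
    rw [hFe, show (fun i : Fin nt => π ((Finset.univ.filter fun x => π x ≠ x).orderEmbOfFin h i))
      = π ∘ ((Finset.univ.filter fun x => π x ≠ x).orderEmbOfFin h) from rfl,
      ← Finset.image_image, emb_image _ h, supp_image]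
  have hinj : Set.InjOn F (Snn n nt) := by
    intro π hπ π' hπ' hFF
    have h : (Finset.univ.filter fun x => π x ≠ x).card = nt := by simpa [Snn] using hπ
    have h' : (Finset.univ.filter fun x => π' x ≠ x).card = nt := by simpa [Snn] using hπ'
    have hst : (Finset.univ.filter fun x => π x ≠ x) = (Finset.univ.filter fun x => π' x ≠ x) := by
      rw [← key π h, ← key π' h', hFF]
    apply Equiv.ext
    intro x
    by_cases hx : x ∈ (Finset.univ.filter fun y => π y ≠ y)
    · have hx' : x ∈ Finset.image ((Finset.univ.filter fun y => π y ≠ y).orderEmbOfFin h)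
          Finset.univ := by rw [emb_image _ h]; exact hx
      obtain ⟨i, -, hi⟩ := Finset.mem_image.mp hx'
      have hFe : F π i = π ((Finset.univ.filter fun y => π y ≠ y).orderEmbOfFin h i) := by
        rw [hF]; simp [h]
      have hFe' : F π' i = π' ((Finset.univ.filter fun y => π' y ≠ y).orderEmbOfFin h' i) := by
        rw [hF]; simp [h']
      have hemb : (Finset.univ.filter fun y => π y ≠ y).orderEmbOfFin h
          = (Finset.univ.filter fun y => π' y ≠ y).orderEmbOfFin h' := by
        apply Finset.orderEmbOfFin_unique'
        intro j
        rw [← hst]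
        exact Finset.orderEmbOfFin_mem _ h j
      calc π x = F π i := by rw [hFe, hi]
        _ = F π' i := by rw [hFF]
        _ = π' x := by rw [hFe', ← hemb, hi]
    · have hx2 : x ∉ (Finset.univ.filter fun y => π' y ≠ y) := by rw [← hst]; exact hx
      simp only [mem_filter, mem_univ, true_and, not_not] at hx hx2
      rw [hx, hx2]
  calc (Snn n nt).card ≤ (Finset.univ : Finset (Fin nt → Fin n)).card :=
        Finset.card_le_card_of_injOn F (fun _ _ => Finset.mem_univ _) hinj
    _ = n ^ nt := by simp [Fintype.card_fun]

lemma Snn_zero' (n : ℕ) : (Snn n 0) = {1} := by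
  ext π
  simp only [Snn, Finset.mem_filter, Finset.mem_univ, true_and, Finset.card_eq_zero,
    Finset.mem_singleton]
  constructor
  · intro h
    apply Equiv.ext
    intro x
    by_contra hx
    have : x ∈ (Finset.univ.filter fun x => π x ≠ x) := by
      simp only [Finset.mem_filter, Finset.mem_univ, true_and]
      simpa using hx
    rw [h] at this
    simp at this
  · intro h
    subst h
    simp

lemma Snn_one' (n : ℕ) : (Snn n 1) = ∅ := by
  ext π
  simp only [Snn, Finset.mem_filter, Finset.mem_univ, true_and, Finset.card_eq_one,
    Finset.notMem_empty, iff_false]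
  rintro ⟨x, hx⟩
  have hxx : π x ≠ x := by
    have : x ∈ (Finset.univ.filter fun y => π y ≠ y) := by rw [hx]; simp
    simpa using this
  have hpx : π (π x) ≠ π x := fun h => hxx (π.injective h)
  have h1 : π x ∈ (Finset.univ.filter fun y => π y ≠ y) := by simp [hpx]
  rw [hx] at h1
  exact hxx (Finset.mem_singleton.mp h1)

end AuxPermGF

/-- the generating function of permutations counted by non-fixed points. -/
theorem perm_gf_bound (n : ℕ) (hn : 1 ≤ n) (z : ℝ) (hz0 : 0 ≤ z) (hz1 : z < 1 / n) :
    ∑ nt ∈ Finset.range (n + 1), ((Snn n nt).card : ℝ) * z ^ nt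
      ≤ 1 + (n : ℝ) ^ 2 * z ^ 2 / (1 - n * z) := by
  set r : ℝ := (n : ℝ) * z with hr
  have hn0 : (0 : ℝ) < n := by exact_mod_cast hn
  have hr0 : 0 ≤ r := mul_nonneg hn0.le hz0
  have hr1 : r < 1 := by
    rw [hr, mul_comm]
    exact (lt_div_iff₀ hn0).mp hz1
  have h1r : (0:ℝ) < 1 - r := by linarith
  set f : ℕ → ℝ := fun nt => ((Snn n nt).card : ℝ) * z ^ nt with hf
  have hsplit : ∑ nt ∈ Finset.range (n + 1), f nt
      = ∑ nt ∈ Finset.range 2, f nt + ∑ nt ∈ Finset.Ico 2 (n + 1), f nt := by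
    rw [Finset.range_eq_Ico]
    exact (Finset.sum_Ico_consecutive f (m := 0) (n := 2) (k := n + 1) (by norm_num) (by omega)).symm
  have hhead : ∑ nt ∈ Finset.range 2, f nt = 1 := by
    rw [Finset.sum_range_succ, Finset.sum_range_one, hf]
    simp [Snn_zero', Snn_one']
  have htail : ∑ nt ∈ Finset.Ico 2 (n + 1), f nt ≤ ∑ nt ∈ Finset.Ico 2 (n + 1), r ^ nt := by
    apply Finset.sum_le_sum
    intro nt _
    rw [hf, hr, mul_pow]
    apply mul_le_mul_of_nonneg_right _ (pow_nonneg hz0 nt)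
    exact_mod_cast card_Snn_le n nt hn
  have hgeom : ∀ m : ℕ, ∑ i ∈ Finset.range m, r ^ i ≤ 1 / (1 - r) := by
    intro m
    rw [le_div_iff₀ h1r]
    have hgm := geom_sum_mul r m
    have hpow : 0 ≤ r ^ m := pow_nonneg hr0 m
    nlinarith [hgm]
  have htail2 : ∑ nt ∈ Finset.Ico 2 (n + 1), r ^ nt ≤ r ^ 2 * (1 / (1 - r)) := by
    rw [Finset.sum_Ico_eq_sum_range]
    have hshift : ∑ i ∈ Finset.range (n + 1 - 2), r ^ (2 + i)
        = r ^ 2 * ∑ i ∈ Finset.range (n + 1 - 2), r ^ i := by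
      rw [Finset.mul_sum]
      exact Finset.sum_congr rfl fun i _ => pow_add r 2 i
    rw [hshift]
    exact mul_le_mul_of_nonneg_left (hgeom _) (pow_nonneg hr0 2)
  have hfinal : r ^ 2 * (1 / (1 - r)) = (n : ℝ) ^ 2 * z ^ 2 / (1 - n * z) := by
    rw [hr]
    ring
  calc ∑ nt ∈ Finset.range (n + 1), f nt
      = ∑ nt ∈ Finset.range 2, f nt + ∑ nt ∈ Finset.Ico 2 (n + 1), f nt := hsplit
    _ ≤ 1 + r ^ 2 * (1 / (1 - r)) := by
        rw [hhead]
        exact add_le_add le_rfl (htail.trans htail2)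
    _ = 1 + (n : ℝ) ^ 2 * z ^ 2 / (1 - n * z) := by rw [hfinal]
end

section
/- Let z ≥ 0 be real and let {η_π : π a non-identity permutation of [n]} be a family of events in a probability space. If P[η_π] ≤ z^{ñ} for every ñ and every π ∈ S_{n,ñ} with π ≠ id, then P[⋃_{π ≠ id} η_π] ≤ 3·n²·z². -/
open Finset

lemma orderIsoOfFin_congr {α : Type*} [LinearOrder α] {s t : Finset α} (h : s = t) {k : ℕ}
    (hs : s.card = k) (ht : t.card = k) (i : Fin k) :
    (s.orderIsoOfFin hs i : α) = (t.orderIsoOfFin ht i : α) := by subst h; rfl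

lemma Snn_card_le (n k : ℕ) : (Snn n k).card ≤ n ^ k := by
  rcases Nat.eq_zero_or_pos n with hn | hn
  · subst hn
    rcases Nat.eq_zero_or_pos k with hk | hk
    · subst hk
      unfold Snn
      simpa using (Finset.card_filter_le _ _).trans_eq (by simp)
    · have : Snn 0 k = ∅ := by
        ext π
        simp only [Snn, mem_filter, mem_univ, true_and, Finset.notMem_empty, iff_false]
        intro hc
        have : (Finset.univ.filter fun x : Fin 0 => π x ≠ x) = ∅ := by
          apply Finset.eq_empty_of_forall_notMem; intro x; exact absurd x.2 (by omega)
        rw [this] at hc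
        simp at hc; omega
      simp [this]
  · classical
    set F : Equiv.Perm (Fin n) → (Fin k → Fin n) := fun π =>
      if h : (Finset.univ.filter fun x => π x ≠ x).card = k then
        fun i => π (((Finset.univ.filter fun x => π x ≠ x).orderIsoOfFin h) i)
      else fun _ => ⟨0, hn⟩ with hF
    have himg : ∀ π ∈ Snn n k, Finset.image (F π) Finset.univ
        = Finset.univ.filter fun x => π x ≠ x := by
      intro π hπ
      have hc : (Finset.univ.filter fun x => π x ≠ x).card = k := by
        simpa [Snn] using hπ
      set s := Finset.univ.filter fun x => π x ≠ x with hs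
      have hmaps : ∀ x ∈ s, π x ∈ s := by
        intro x hx
        simp only [hs, mem_filter, mem_univ, true_and] at hx ⊢
        intro hh
        exact hx (π.injective hh)
      have h1 : Finset.image (F π) Finset.univ = Finset.image π s := by
        rw [hF]
        simp only [dif_pos (show (Finset.univ.filter fun x => π x ≠ x).card = k from hc)]
        ext y
        simp only [mem_image, mem_univ, true_and]
        constructor
        · rintro ⟨i, rfl⟩
          exact ⟨_, (s.orderIsoOfFin hc i).2, rfl⟩
        · rintro ⟨x, hx, rfl⟩
          obtain ⟨i, hi⟩ := (s.orderIsoOfFin hc).surjective ⟨x, hx⟩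
          exact ⟨i, by show π (s.orderIsoOfFin hc i : Fin n) = π x; rw [hi]⟩
      rw [h1]
      apply Finset.eq_of_subset_of_card_le
      · intro y hy
        obtain ⟨x, hx, rfl⟩ := Finset.mem_image.mp hy
        exact hmaps x hx
      · rw [Finset.card_image_of_injective _ π.injective]
    have hinj : Set.InjOn F (Snn n k) := by
      intro π hπ σ hσ hFeq
      have hcπ : (Finset.univ.filter fun x => π x ≠ x).card = k := by simpa [Snn] using hπ
      have hcσ : (Finset.univ.filter fun x => σ x ≠ x).card = k := by simpa [Snn] using hσ
      have hsets : (Finset.univ.filter fun x => π x ≠ x)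
          = (Finset.univ.filter fun x => σ x ≠ x) := by
        rw [← himg π hπ, ← himg σ hσ, hFeq]
      ext x
      by_cases hx : x ∈ Finset.univ.filter fun y => π y ≠ y
      · obtain ⟨i, hi⟩ := ((Finset.univ.filter fun y => π y ≠ y).orderIsoOfFin hcπ).surjective
          ⟨x, hx⟩
        have hix : (((Finset.univ.filter fun y => π y ≠ y).orderIsoOfFin hcπ) i : Fin n) = x := by
          rw [hi]
        have h1 : F π i = π x := by
          rw [hF]; simp only [dif_pos hcπ]; rw [hix]
        have h2 : F σ i = σ x := by
          rw [hF]; simp only [dif_pos hcσ]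
          rw [orderIsoOfFin_congr hsets.symm hcσ hcπ i, hix]
        rw [← h1, ← h2, hFeq]
      · simp only [mem_filter, mem_univ, true_and, not_not] at hx
        have hx' : x ∉ Finset.univ.filter fun y => σ y ≠ y := by
          rw [← hsets]; simp [hx]
        simp only [mem_filter, mem_univ, true_and, not_not] at hx'
        rw [hx, hx']
    calc (Snn n k).card ≤ (Finset.univ : Finset (Fin k → Fin n)).card :=
          Finset.card_le_card_of_injOn F (fun _ _ => mem_univ _) hinj
      _ = n ^ k := by simp [Fintype.card_fun]

lemma real_sum_bound (n : ℕ) (z : ℝ) (hz : 0 ≤ z) (hsmall : 3 * (n : ℝ) ^ 2 * z ^ 2 < 1) :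
    ∑ π ∈ Finset.univ.filter (fun π : Equiv.Perm (Fin n) => π ≠ 1),
      z ^ ((Finset.univ.filter fun x => π x ≠ x).card) ≤ 3 * (n : ℝ) ^ 2 * z ^ 2 := by
  classical
  set r : ℝ := n * z with hr
  have hr0 : 0 ≤ r := mul_nonneg (Nat.cast_nonneg n) hz
  have hrsq : 3 * r ^ 2 < 1 := by rw [hr, mul_pow]; linarith
  have hr23 : r ≤ 2 / 3 := by nlinarith
  have hr1 : r < 1 := by linarith
  -- group by number of non-fixed points
  have hmaps : ∀ π ∈ Finset.univ.filter (fun π : Equiv.Perm (Fin n) => π ≠ 1),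
      (Finset.univ.filter fun x => π x ≠ x).card ∈ Finset.Ico 2 (n + 1) := by
    intro π hπ
    simp only [mem_filter, mem_univ, true_and] at hπ
    rw [Finset.mem_Ico]
    constructor
    · have := Equiv.Perm.one_lt_card_support_of_ne_one hπ
      have hsupp : π.support = Finset.univ.filter fun x => π x ≠ x := by
        ext x; simp [Equiv.Perm.mem_support]
      rw [hsupp] at this; omega
    · have := Finset.card_filter_le Finset.univ (fun x => π x ≠ x)
      simp only [Finset.card_univ, Fintype.card_fin] at this
      omega
  rw [← Finset.sum_fiberwise_of_maps_to hmaps]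
  have hstep : ∀ k ∈ Finset.Ico 2 (n + 1),
      (∑ π ∈ (Finset.univ.filter (fun π : Equiv.Perm (Fin n) => π ≠ 1)).filter
        (fun π => (Finset.univ.filter fun x => π x ≠ x).card = k),
        z ^ ((Finset.univ.filter fun x => π x ≠ x).card)) ≤ r ^ k := by
    intro k hk
    have hsub : (Finset.univ.filter (fun π : Equiv.Perm (Fin n) => π ≠ 1)).filter
        (fun π => (Finset.univ.filter fun x => π x ≠ x).card = k) ⊆ Snn n k := by
      intro π hπ
      simp only [mem_filter, mem_univ, true_and] at hπ
      simp [Snn, hπ.2]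
    calc (∑ π ∈ (Finset.univ.filter (fun π : Equiv.Perm (Fin n) => π ≠ 1)).filter
        (fun π => (Finset.univ.filter fun x => π x ≠ x).card = k),
        z ^ ((Finset.univ.filter fun x => π x ≠ x).card))
        = ∑ π ∈ (Finset.univ.filter (fun π : Equiv.Perm (Fin n) => π ≠ 1)).filter
            (fun π => (Finset.univ.filter fun x => π x ≠ x).card = k), z ^ k := by
          apply Finset.sum_congr rfl
          intro π hπ
          simp only [mem_filter] at hπ
          rw [hπ.2]
      _ = ((Finset.univ.filter (fun π : Equiv.Perm (Fin n) => π ≠ 1)).filter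
            (fun π => (Finset.univ.filter fun x => π x ≠ x).card = k)).card * z ^ k := by
          rw [Finset.sum_const, nsmul_eq_mul]
      _ ≤ (n ^ k : ℝ) * z ^ k := by
          apply mul_le_mul_of_nonneg_right _ (pow_nonneg hz k)
          exact_mod_cast (Finset.card_le_card hsub).trans (Snn_card_le n k)
      _ = r ^ k := by rw [hr, mul_pow]
  calc (∑ k ∈ Finset.Ico 2 (n + 1),
      ∑ π ∈ (Finset.univ.filter (fun π : Equiv.Perm (Fin n) => π ≠ 1)).filter
        (fun π => (Finset.univ.filter fun x => π x ≠ x).card = k),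
        z ^ ((Finset.univ.filter fun x => π x ≠ x).card))
      ≤ ∑ k ∈ Finset.Ico 2 (n + 1), r ^ k := Finset.sum_le_sum hstep
    _ ≤ r ^ 2 / (1 - r) := geom_sum_Ico_le_of_lt_one hr0 hr1
    _ ≤ 3 * r ^ 2 := by
        rw [div_le_iff₀ (by linarith)]
        nlinarith [sq_nonneg r]
    _ = 3 * (n : ℝ) ^ 2 * z ^ 2 := by rw [hr, mul_pow]; ring


/-- the union bound over non-identity permutations. -/
theorem union_bound_perms {Ω : Type*} [MeasurableSpace Ω]
    (μ : MeasureTheory.Measure Ω) [MeasureTheory.IsProbabilityMeasure μ]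
    (n : ℕ) (z : ℝ) (hz : 0 ≤ z)
    (η : Equiv.Perm (Fin n) → Set Ω)
    (h : ∀ nt : ℕ, ∀ π ∈ Snn n nt, π ≠ 1 → μ (η π) ≤ ENNReal.ofReal (z ^ nt)) :
    μ (⋃ π ∈ {π : Equiv.Perm (Fin n) | π ≠ 1}, η π)
      ≤ ENNReal.ofReal (3 * (n : ℝ) ^ 2 * z ^ 2) := by
  classical
  by_cases hbig : 1 ≤ 3 * (n : ℝ) ^ 2 * z ^ 2
  · calc μ (⋃ π ∈ {π : Equiv.Perm (Fin n) | π ≠ 1}, η π) ≤ 1 := MeasureTheory.prob_le_one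
      _ = ENNReal.ofReal 1 := by simp
      _ ≤ ENNReal.ofReal (3 * (n : ℝ) ^ 2 * z ^ 2) := ENNReal.ofReal_le_ofReal hbig
  · push_neg at hbig
    set s : Finset (Equiv.Perm (Fin n)) := Finset.univ.filter (fun π => π ≠ 1) with hsdef
    have hUeq : (⋃ π ∈ {π : Equiv.Perm (Fin n) | π ≠ 1}, η π) = ⋃ π ∈ s, η π := by
      ext ω; simp [hsdef]
    rw [hUeq]
    calc μ (⋃ π ∈ s, η π) ≤ ∑ π ∈ s, μ (η π) := MeasureTheory.measure_biUnion_finset_le s η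
      _ ≤ ∑ π ∈ s, ENNReal.ofReal (z ^ ((Finset.univ.filter fun x => π x ≠ x).card)) := by
          apply Finset.sum_le_sum
          intro π hπ
          have hπne : π ≠ 1 := by simpa [hsdef] using hπ
          exact h _ π (by simp [Snn]) hπne
      _ = ENNReal.ofReal (∑ π ∈ s, z ^ ((Finset.univ.filter fun x => π x ≠ x).card)) := by
          rw [ENNReal.ofReal_sum_of_nonneg]
          intro π _
          exact pow_nonneg hz _
      _ ≤ ENNReal.ofReal (3 * (n : ℝ) ^ 2 * z ^ 2) :=
          ENNReal.ofReal_le_ofReal (real_sum_bound n z hz hbig)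
end

section
/- For each n, let (G_a, G_b) ~ ER(n, p(n)), let t = n(n−1)/2, let M be the number of vertex pairs e with (G_a(e), G_b(e)) = (1,1) (so M has a Binomial(t, p11(n)) distribution), and let E_n be an event. Suppose there are sequences z9(n) ≥ 1 and z8(n) ∈ (0,1) and a constant ε > 0 such that P[E_n | M = m] ≤ z9(n)·z8(n)^m for all m ≤ (1+ε)·t·p11(n), and t·p11(n)·(1 − z8(n)) − log z9(n) → ∞ as n → ∞. Then P[E_n] → 0. -/
open Finset

/-- The number of vertex pairs carrying the label `(1,1)`, i.e. `|E(G_a ∧ G_b)|`. -/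
def Mcount {n : ℕ} (gab : LGraph n × LGraph n) : ℕ :=
  (Finset.univ.filter fun e : VPairs n => gab.1 e = true ∧ gab.2 e = true).card

section Helpers

lemma sum_prod_q {S : Type*} [Fintype S] [DecidableEq S] (q : Bool → Bool → ℝ) :
    ∑ gab : (S → Bool) × (S → Bool), ∏ e : S, q (gab.1 e) (gab.2 e)
      = (q true true + q true false + q false true + q false false) ^ Fintype.card S := by
  rw [← Equiv.sum_comp (Equiv.arrowProdEquivProdArrow S (fun _ => Bool) (fun _ => Bool))]
  have : ∀ h : S → Bool × Bool,
      (∏ e : S, q ((Equiv.arrowProdEquivProdArrow S (fun _ => Bool) (fun _ => Bool) h).1 e)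
        ((Equiv.arrowProdEquivProdArrow S (fun _ => Bool) (fun _ => Bool) h).2 e)) = ∏ e : S, q (h e).1 (h e).2 := by
    intro h; rfl
  simp_rw [this]
  rw [show (univ : Finset (S → Bool × Bool))
      = Fintype.piFinset (fun _ : S => (univ : Finset (Bool × Bool))) by simp]
  rw [Finset.sum_prod_piFinset (univ : Finset (Bool × Bool)) (fun _ c => q c.1 c.2)]
  rw [Finset.prod_const]
  congr 1
  rw [Fintype.sum_prod_type]
  simp [Fintype.sum_bool]
  ring

lemma pv_nonneg {a b c d : ℝ} (ha : 0 ≤ a) (hb : 0 ≤ b) (hc : 0 ≤ c) (hd : 0 ≤ d)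
    (i j : Bool) : 0 ≤ pv a b c d i j := by
  cases i <;> cases j <;> simpa [pv]

lemma weight_nonneg {n : ℕ} {a b c d : ℝ} (ha : 0 ≤ a) (hb : 0 ≤ b) (hc : 0 ≤ c) (hd : 0 ≤ d)
    (gab : LGraph n × LGraph n) :
    0 ≤ ∏ e : VPairs n, pv a b c d (gab.1 e) (gab.2 e) :=
  Finset.prod_nonneg fun e _ => pv_nonneg ha hb hc hd _ _

lemma ERprob_nonneg {n : ℕ} {a b c d : ℝ} (ha : 0 ≤ a) (hb : 0 ≤ b) (hc : 0 ≤ c) (hd : 0 ≤ d)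
    (E : LGraph n × LGraph n → Prop) : 0 ≤ ERprob n (pv a b c d) E := by
  classical
  refine Finset.sum_nonneg fun gab _ => mul_nonneg ?_ (weight_nonneg ha hb hc hd gab)
  split <;> norm_num

lemma ERprob_mono {n : ℕ} {a b c d : ℝ} (ha : 0 ≤ a) (hb : 0 ≤ b) (hc : 0 ≤ c) (hd : 0 ≤ d)
    {Q R : LGraph n × LGraph n → Prop} (h : ∀ gab, Q gab → R gab) :
    ERprob n (pv a b c d) Q ≤ ERprob n (pv a b c d) R := by
  classical
  refine Finset.sum_le_sum fun gab _ => ?_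
  refine mul_le_mul_of_nonneg_right ?_ (weight_nonneg ha hb hc hd gab)
  by_cases hQ : Q gab
  · simp [hQ, h gab hQ]
  · simp [hQ]; split <;> norm_num

lemma Mcount_le {n : ℕ} (gab : LGraph n × LGraph n) :
    Mcount gab ≤ Fintype.card (VPairs n) := by
  classical
  exact (Finset.card_filter_le _ _).trans (le_of_eq (Finset.card_univ))

lemma mgf {n : ℕ} (a b c d z : ℝ) :
    ∑ gab : LGraph n × LGraph n,
        z ^ Mcount gab * ∏ e : VPairs n, pv a b c d (gab.1 e) (gab.2 e)
      = (z * a + b + c + d) ^ Fintype.card (VPairs n) := by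
  classical
  have key : ∀ gab : LGraph n × LGraph n,
      z ^ Mcount gab * ∏ e : VPairs n, pv a b c d (gab.1 e) (gab.2 e)
        = ∏ e : VPairs n,
            ((if gab.1 e = true ∧ gab.2 e = true then z else 1) *
              pv a b c d (gab.1 e) (gab.2 e)) := by
    intro gab
    rw [Finset.prod_mul_distrib]
    congr 1
    rw [Finset.prod_ite, Finset.prod_const, Finset.prod_const, one_pow, mul_one]
    rfl
  simp_rw [key]
  rw [sum_prod_q (fun i j => (if i = true ∧ j = true then z else 1) * pv a b c d i j)]
  norm_num [pv]

lemma ERprob_decomp {n : ℕ} (a b c d : ℝ) (Q : LGraph n × LGraph n → Prop) :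
    ERprob n (pv a b c d) Q
      = ∑ m ∈ Finset.range (Fintype.card (VPairs n) + 1),
          ERprob n (pv a b c d) (fun gab => Q gab ∧ Mcount gab = m) := by
  classical
  unfold ERprob
  rw [Finset.sum_comm]
  refine Finset.sum_congr rfl fun gab _ => ?_
  rw [← Finset.sum_mul]
  congr 1
  have hM : Mcount gab ∈ Finset.range (Fintype.card (VPairs n) + 1) :=
    Finset.mem_range.mpr (Nat.lt_succ_of_le (Mcount_le gab))
  by_cases hQ : Q gab
  · rw [if_pos hQ]
    rw [Finset.sum_congr rfl (g := fun m => if Mcount gab = m then (1:ℝ) else 0)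
      (fun m _ => by simp [hQ])]
    rw [Finset.sum_ite_eq]
    rw [if_pos hM]
  · simp [hQ]

lemma sum_pow_Pm {n : ℕ} (a b c d z : ℝ) :
    ∑ m ∈ Finset.range (Fintype.card (VPairs n) + 1),
        z ^ m * ERprob n (pv a b c d) (fun gab => Mcount gab = m)
      = (z * a + b + c + d) ^ Fintype.card (VPairs n) := by
  classical
  rw [← mgf (n := n) a b c d z]
  unfold ERprob
  simp_rw [Finset.mul_sum]
  rw [Finset.sum_comm]
  refine Finset.sum_congr rfl fun gab _ => ?_
  have hM : Mcount gab ∈ Finset.range (Fintype.card (VPairs n) + 1) :=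
    Finset.mem_range.mpr (Nat.lt_succ_of_le (Mcount_le gab))
  simp only [mul_ite, ite_mul, mul_one, mul_zero, zero_mul, one_mul]
  rw [Finset.sum_ite_eq]
  rw [if_pos hM]

end Helpers

set_option maxHeartbeats 1000000 in
lemma master_bound (n : ℕ) (a b c d : ℝ) (ha : 0 ≤ a) (hb : 0 ≤ b) (hc : 0 ≤ c) (hd : 0 ≤ d)
    (hs : a + b + c + d = 1) (E : LGraph n × LGraph n → Prop) (z8 z9 ε : ℝ)
    (hz9 : 1 ≤ z9) (h8a : 0 < z8) (h8b : z8 < 1) (hε : 0 < ε)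
    (hcond : ∀ m : ℕ, (m : ℝ) ≤ (1 + ε) * ((n : ℝ) * ((n : ℝ) - 1) / 2) * a →
      ERprob n (pv a b c d) (fun gab => E gab ∧ Mcount gab = m) /
        ERprob n (pv a b c d) (fun gab => Mcount gab = m) ≤ z9 * z8 ^ m) :
    ERprob n (pv a b c d) E ≤
      Real.exp (Real.log z9 - ((n : ℝ) * ((n : ℝ) - 1) / 2) * a * (1 - z8))
      + Real.exp (-(((1 + ε) * Real.log (1 + ε) - ε) * (((n : ℝ) * ((n : ℝ) - 1) / 2) * a))) := by
  classical
  set T : ℝ := (n : ℝ) * ((n : ℝ) - 1) / 2 with hTdef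
  set t : ℕ := Fintype.card (VPairs n) with htdef
  have hT : (t : ℝ) = T := by
    rw [htdef, show Fintype.card (VPairs n) = n.choose 2 by
      simpa using Sym2.card_subtype_not_diag (α := Fin n)]
    exact Nat.cast_choose_two (K := ℝ) n
  set θ : ℝ := (1 + ε) * T * a with hθdef
  have hεpos : (0:ℝ) < 1 + ε := by linarith
  set Pm : ℕ → ℝ := fun m => ERprob n (pv a b c d) (fun gab => Mcount gab = m) with hPmdef
  set PEm : ℕ → ℝ := fun m => ERprob n (pv a b c d) (fun gab => E gab ∧ Mcount gab = m)
    with hPEmdef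
  have hPmnn : ∀ m, 0 ≤ Pm m := fun m => ERprob_nonneg ha hb hc hd _
  have hPEnn : ∀ m, 0 ≤ PEm m := fun m => ERprob_nonneg ha hb hc hd _
  have hPEle : ∀ m, PEm m ≤ Pm m := fun m =>
    ERprob_mono ha hb hc hd (fun gab h => h.2)
  -- small-m bound
  have hsmall : ∀ m : ℕ, (m : ℝ) ≤ θ → PEm m ≤ z9 * z8 ^ m * Pm m := by
    intro m hm
    rcases eq_or_lt_of_le (hPmnn m) with h0 | hpos
    · have h1 : PEm m ≤ 0 := (hPEle m).trans (le_of_eq h0.symm)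
      have h2 : 0 ≤ z9 * z8 ^ m * Pm m :=
        mul_nonneg (mul_nonneg (by linarith) (pow_nonneg h8a.le m)) (hPmnn m)
      linarith
    · have := hcond m hm
      rw [div_le_iff₀ hpos] at this
      exact this
  -- large-m bound
  have hlarge : ∀ m : ℕ, θ < (m : ℝ) →
      PEm m ≤ ((1 + ε) ^ m * (1 + ε) ^ (-θ : ℝ)) * Pm m := by
    intro m hm
    have hcoef : (1:ℝ) ≤ (1 + ε) ^ m * (1 + ε) ^ (-θ : ℝ) := by
      have : ((1:ℝ) + ε) ^ m * (1 + ε) ^ (-θ : ℝ) = (1 + ε) ^ ((m : ℝ) - θ) := by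
        rw [← Real.rpow_natCast (1 + ε) m, ← Real.rpow_add hεpos]
        ring_nf
      rw [this]
      calc (1:ℝ) = (1 + ε) ^ (0:ℝ) := by rw [Real.rpow_zero]
        _ ≤ (1 + ε) ^ ((m : ℝ) - θ) :=
          Real.rpow_le_rpow_of_exponent_le (by linarith) (by linarith)
    calc PEm m ≤ Pm m := hPEle m
      _ ≤ ((1 + ε) ^ m * (1 + ε) ^ (-θ : ℝ)) * Pm m :=
        le_mul_of_one_le_left (hPmnn m) hcoef
  -- decompose and split
  have hdecomp : ERprob n (pv a b c d) E = ∑ m ∈ Finset.range (t + 1), PEm m :=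
    ERprob_decomp a b c d E
  set R : Finset ℕ := Finset.range (t + 1) with hRdef
  have hsplit : ∑ m ∈ R, PEm m
      = ∑ m ∈ R.filter (fun m : ℕ => (m : ℝ) ≤ θ), PEm m
        + ∑ m ∈ R.filter (fun m : ℕ => ¬ ((m : ℝ) ≤ θ)), PEm m :=
    (Finset.sum_filter_add_sum_filter_not R _ _).symm
  have hbound1 : ∑ m ∈ R.filter (fun m : ℕ => (m : ℝ) ≤ θ), PEm m
      ≤ ∑ m ∈ R, z9 * z8 ^ m * Pm m := by
    refine le_trans (Finset.sum_le_sum fun m hm => hsmall m (Finset.mem_filter.mp hm).2) ?_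
    refine Finset.sum_le_sum_of_subset_of_nonneg (Finset.filter_subset _ _) fun m _ _ =>
      mul_nonneg (mul_nonneg (by linarith) (pow_nonneg h8a.le m)) (hPmnn m)
  have hbound2 : ∑ m ∈ R.filter (fun m : ℕ => ¬ ((m : ℝ) ≤ θ)), PEm m
      ≤ ∑ m ∈ R, ((1 + ε) ^ m * (1 + ε) ^ (-θ : ℝ)) * Pm m := by
    refine le_trans (Finset.sum_le_sum fun m hm =>
      hlarge m (lt_of_not_ge (Finset.mem_filter.mp hm).2)) ?_
    refine Finset.sum_le_sum_of_subset_of_nonneg (Finset.filter_subset _ _) fun m _ _ =>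
      mul_nonneg (mul_nonneg (pow_nonneg hεpos.le m) (Real.rpow_nonneg hεpos.le _)) (hPmnn m)
  -- evaluate the two sums via the mgf
  have hsum1 : ∑ m ∈ R, z9 * z8 ^ m * Pm m = z9 * (z8 * a + b + c + d) ^ t := by
    calc ∑ m ∈ R, z9 * z8 ^ m * Pm m = z9 * ∑ m ∈ R, z8 ^ m * Pm m := by
          rw [Finset.mul_sum]; exact Finset.sum_congr rfl fun m _ => by ring
      _ = z9 * (z8 * a + b + c + d) ^ t := by
          rw [show (∑ m ∈ R, z8 ^ m * Pm m) = (z8 * a + b + c + d) ^ t from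
            sum_pow_Pm a b c d z8]
  have hsum2 : ∑ m ∈ R, ((1 + ε) ^ m * (1 + ε) ^ (-θ : ℝ)) * Pm m
      = (1 + ε) ^ (-θ : ℝ) * ((1 + ε) * a + b + c + d) ^ t := by
    calc ∑ m ∈ R, ((1 + ε) ^ m * (1 + ε) ^ (-θ : ℝ)) * Pm m
        = (1 + ε) ^ (-θ : ℝ) * ∑ m ∈ R, (1 + ε) ^ m * Pm m := by
          rw [Finset.mul_sum]; exact Finset.sum_congr rfl fun m _ => by ring
      _ = (1 + ε) ^ (-θ : ℝ) * ((1 + ε) * a + b + c + d) ^ t := by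
          rw [show (∑ m ∈ R, (1 + ε) ^ m * Pm m) = ((1 + ε) * a + b + c + d) ^ t from
            sum_pow_Pm a b c d (1 + ε)]
  -- analytic bounds
  have hbase1 : z8 * a + b + c + d = 1 - (1 - z8) * a := by nlinarith [hs]
  have hbase1nn : 0 ≤ z8 * a + b + c + d := by positivity
  have h1 : z9 * (z8 * a + b + c + d) ^ t ≤ Real.exp (Real.log z9 - T * a * (1 - z8)) := by
    have hle : z8 * a + b + c + d ≤ Real.exp (-((1 - z8) * a)) := by
      have := Real.add_one_le_exp (-((1 - z8) * a))
      linarith [hbase1]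
    have hpow : (z8 * a + b + c + d) ^ t ≤ Real.exp ((t : ℝ) * (-((1 - z8) * a))) := by
      rw [Real.exp_nat_mul]
      exact pow_le_pow_left₀ hbase1nn hle t
    have hz9pos : (0:ℝ) < z9 := by linarith
    calc z9 * (z8 * a + b + c + d) ^ t
        ≤ z9 * Real.exp ((t : ℝ) * (-((1 - z8) * a))) :=
          mul_le_mul_of_nonneg_left hpow hz9pos.le
      _ = Real.exp (Real.log z9 - T * a * (1 - z8)) := by
          have heq : Real.log z9 - T * a * (1 - z8)
              = Real.log z9 + (t : ℝ) * (-((1 - z8) * a)) := by rw [hT]; ring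
          rw [heq, Real.exp_add, Real.exp_log hz9pos]
  have hbase2 : (1 + ε) * a + b + c + d = 1 + ε * a := by linear_combination hs
  have h2 : (1 + ε) ^ (-θ : ℝ) * ((1 + ε) * a + b + c + d) ^ t
      ≤ Real.exp (-(((1 + ε) * Real.log (1 + ε) - ε) * (T * a))) := by
    have hle : (1 + ε) * a + b + c + d ≤ Real.exp (ε * a) := by
      have := Real.add_one_le_exp (ε * a)
      linarith [hbase2]
    have hb2nn : 0 ≤ (1 + ε) * a + b + c + d := by positivity
    have hpow : ((1 + ε) * a + b + c + d) ^ t ≤ Real.exp ((t : ℝ) * (ε * a)) := by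
      rw [Real.exp_nat_mul]
      exact pow_le_pow_left₀ hb2nn hle t
    calc (1 + ε) ^ (-θ : ℝ) * ((1 + ε) * a + b + c + d) ^ t
        ≤ (1 + ε) ^ (-θ : ℝ) * Real.exp ((t : ℝ) * (ε * a)) :=
          mul_le_mul_of_nonneg_left hpow (Real.rpow_nonneg hεpos.le _)
      _ = Real.exp (-(((1 + ε) * Real.log (1 + ε) - ε) * (T * a))) := by
          rw [Real.rpow_def_of_pos hεpos, ← Real.exp_add, hT]
          congr 1
          rw [hθdef]
          ring
  rw [hdecomp, hsplit]
  exact add_le_add (hbound1.trans (hsum1 ▸ h1)) (hbound2.trans (hsum2 ▸ h2))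

/-- the averaging lemma over the distribution of `M` (Lemma 12). -/
theorem averaging_over_M
    (p11 p10 p01 p00 : ℕ → ℝ)
    (hpos : ∀ n, 0 ≤ p11 n ∧ 0 ≤ p10 n ∧ 0 ≤ p01 n ∧ 0 ≤ p00 n)
    (hsum : ∀ n, p11 n + p10 n + p01 n + p00 n = 1)
    (E : (n : ℕ) → LGraph n × LGraph n → Prop)
    (z8 z9 : ℕ → ℝ)
    (hz9 : ∀ n, 1 ≤ z9 n)
    (hz8 : ∀ n, 0 < z8 n ∧ z8 n < 1)
    (ε : ℝ) (hε : 0 < ε)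
    (hcond : ∀ n : ℕ, ∀ m : ℕ,
      (m : ℝ) ≤ (1 + ε) * ((n : ℝ) * ((n : ℝ) - 1) / 2) * p11 n →
      ERprob n (pv (p11 n) (p10 n) (p01 n) (p00 n))
          (fun gab => E n gab ∧ Mcount gab = m)
        / ERprob n (pv (p11 n) (p10 n) (p01 n) (p00 n)) (fun gab => Mcount gab = m)
      ≤ z9 n * z8 n ^ m)
    (hlim : Filter.Tendsto
      (fun n : ℕ => ((n : ℝ) * ((n : ℝ) - 1) / 2) * p11 n * (1 - z8 n) - Real.log (z9 n))
      Filter.atTop Filter.atTop) :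
    Filter.Tendsto
      (fun n : ℕ => ERprob n (pv (p11 n) (p10 n) (p01 n) (p00 n)) (E n))
      Filter.atTop (nhds 0) := by
  have hεpos : (0:ℝ) < 1 + ε := by linarith
  have c0pos : 0 < (1 + ε) * Real.log (1 + ε) - ε := by
    have h2 : Real.log (1 / (1 + ε)) < 1 / (1 + ε) - 1 :=
      Real.log_lt_sub_one_of_pos (by positivity) (by
        intro h
        have : (1:ℝ) + ε = 1 := by
          field_simp at h
          linarith
        linarith)
    rw [Real.log_div one_ne_zero (ne_of_gt hεpos), Real.log_one] at h2
    have h3 : 1 - 1 / (1 + ε) < Real.log (1 + ε) := by linarith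
    have h4 : 1 - 1 / (1 + ε) = ε / (1 + ε) := by field_simp; ring
    rw [h4] at h3
    have h5 := (div_lt_iff₀ hεpos).mp h3
    nlinarith
  set T : ℕ → ℝ := fun n => (n : ℝ) * ((n : ℝ) - 1) / 2 with hTdef
  have hTnn : ∀ n, 0 ≤ T n := by
    intro n
    rcases Nat.eq_zero_or_pos n with h | h
    · simp [hTdef, h]
    · have h1 : (1:ℝ) ≤ (n : ℝ) := by exact_mod_cast h
      have : 0 ≤ (n : ℝ) * ((n : ℝ) - 1) := mul_nonneg (by linarith) (by linarith)
      simp only [hTdef]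
      linarith
  have hTp : ∀ n, 0 ≤ T n * p11 n := fun n => mul_nonneg (hTnn n) (hpos n).1
  have hB : Filter.Tendsto (fun n => T n * p11 n) Filter.atTop Filter.atTop := by
    refine Filter.tendsto_atTop_mono (fun n => ?_) hlim
    have hlog : 0 ≤ Real.log (z9 n) := Real.log_nonneg (hz9 n)
    have : T n * p11 n * (1 - z8 n) ≤ T n * p11 n * 1 :=
      mul_le_mul_of_nonneg_left (by linarith [(hz8 n).1]) (hTp n)
    simp only [hTdef] at this ⊢
    linarith
  have g1 : Filter.Tendsto
      (fun n => Real.exp (Real.log (z9 n) - T n * p11 n * (1 - z8 n)))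
      Filter.atTop (nhds 0) := by
    refine Real.tendsto_exp_atBot.comp ?_
    refine Filter.Tendsto.congr (fun n => ?_) (Filter.tendsto_neg_atTop_atBot.comp hlim)
    simp only [Function.comp_apply, hTdef]
    ring
  have g2 : Filter.Tendsto
      (fun n => Real.exp (-(((1 + ε) * Real.log (1 + ε) - ε) * (T n * p11 n))))
      Filter.atTop (nhds 0) := by
    refine Real.tendsto_exp_atBot.comp ?_
    exact Filter.tendsto_neg_atTop_atBot.comp (hB.const_mul_atTop c0pos)
  refine squeeze_zero
    (fun n => ERprob_nonneg (hpos n).1 (hpos n).2.1 (hpos n).2.2.1 (hpos n).2.2.2 (E n))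
    (fun n => master_bound n (p11 n) (p10 n) (p01 n) (p00 n)
      (hpos n).1 (hpos n).2.1 (hpos n).2.2.1 (hpos n).2.2.2 (hsum n) (E n)
      (z8 n) (z9 n) ε (hz9 n) (hz8 n).1 (hz8 n).2 hε (hcond n)) ?_
  simpa using g1.add g2
end
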